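/- Suppose the nodes ξ_1,…,ξ_n are pairwise distinct and a_{i,l_i−1} ≠ 0 for all i. Then the Jacobian J_P(x) of the Prony map is invertible and its inverse equals J_P(x)^{−1} = diag(D_1^{−1},…,D_n^{−1}) · U(ξ_1, l_1+1, …, ξ_n, l_n+1)^{−1}, where D_i^{−1} is the (l_i+1)×(l_i+1) matrix equal to the identity except for its last column, which equals (0, −a_{i,0}/a_{i,l_i−1}, …, −a_{i,l_i−2}/a_{i,l_i−1}, 1/a_{i,l_i−1})^T. -/

import Mathlib

open scoped BigOperators

noncomputable section

/-- Offset of the `i`-th block of columns: the sum of the multiplicities of all previous blocks. -/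
def blockOff {n : ℕ} (L : Fin n → ℕ) (i : Fin n) : ℕ := ∑ i' ∈ Finset.Iio i, L i'

theorem blockOff_add_lt {n : ℕ} (L : Fin n → ℕ) (i : Fin n) {j : ℕ} (hj : j < L i) :
    blockOff L i + j < ∑ i', L i' := by
  have h1 : ∑ i' ∈ insert i (Finset.Iio i), L i' = ∑ i' ∈ Finset.Iio i, L i' + L i := by
    rw [Finset.sum_insert (by simp)]; ring
  have h2 : ∑ i' ∈ insert i (Finset.Iio i), L i' ≤ ∑ i', L i' :=
    Finset.sum_le_sum_of_subset (Finset.subset_univ _)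
  unfold blockOff
  omega

/-- The flattened index of position `j` inside block `i`, when block `i` has size `L i`. -/
def encC {n : ℕ} (L : Fin n → ℕ) (i : Fin n) (j : Fin (L i)) : Fin (∑ i', L i') :=
  ⟨blockOff L i + j, blockOff_add_lt L i j.isLt⟩

/-- The (square) confluent Vandermonde matrix on nodes `ξ_i` with multiplicities `L i`:
rows are indexed by `k = 0,…,(∑ L i)−1`; the entry in row `k` and column `j` of block `i`
is `(k)_j ξ_i^{k−j}` (zero when `j > k`). -/
def confVand {n : ℕ} (L : Fin n → ℕ) (ξ : Fin n → ℂ) :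
    Matrix (Fin (∑ i, L i)) (Fin (∑ i, L i)) ℂ :=
  fun k c => ∑ i, ∑ j : Fin (L i),
    if c = encC L i j then ((k : ℕ).descFactorial j : ℂ) * ξ i ^ ((k : ℕ) - (j : ℕ)) else 0

/-- The index (in the parameter vector) of the magnitude `a_{i,j}` (`j < l i`) or,
for `j = l i`, of the node `ξ_i`; the parameters are ordered
`(a_{1,0},…,a_{1,l_1−1}, ξ_1, …, a_{n,0},…,a_{n,l_n−1}, ξ_n)`. -/
def encP {n : ℕ} (l : Fin n → ℕ) (i : Fin n) (j : Fin (l i + 1)) :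
    Fin (∑ i', (l i' + 1)) :=
  encC (fun i' => l i' + 1) i j

/-- The parameter vector `x = (a_{1,0},…,a_{1,l_1−1}, ξ_1, …, a_{n,0},…,a_{n,l_n−1}, ξ_n)`. -/
def pronyParam {n : ℕ} (l : Fin n → ℕ) (ξ : Fin n → ℂ)
    (a : (i : Fin n) → Fin (l i) → ℂ) : Fin (∑ i', (l i' + 1)) → ℂ :=
  fun p => ∑ i, ∑ j : Fin (l i + 1),
    if p = encP l i j then (if h : (j : ℕ) < l i then a i ⟨j, h⟩ else ξ i) else 0

/-- The Prony map `P : ℂ^R → ℂ^R` sending the parameter vector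
`x = (a_{1,0},…,a_{1,l_1−1}, ξ_1, …, a_{n,0},…,a_{n,l_n−1}, ξ_n)` to the moment vector
`(m_0,…,m_{R−1})`, `m_k = Σ_i Σ_{j<l_i} a_{i,j} (k)_j ξ_i^{k−j}`. -/
def pronyMap {n : ℕ} (l : Fin n → ℕ) (x : Fin (∑ i', (l i' + 1)) → ℂ) :
    Fin (∑ i', (l i' + 1)) → ℂ :=
  fun k => ∑ i, ∑ j : Fin (l i),
    x (encP l i (Fin.castSucc j)) * ((k : ℕ).descFactorial j : ℂ) *
      (x (encP l i (Fin.last (l i)))) ^ ((k : ℕ) - (j : ℕ))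

/-- The Jacobian matrix of the Prony map at `x`: the `(k,p)` entry is the partial
derivative of the `k`-th moment with respect to the `p`-th parameter. -/
def pronyJacobian {n : ℕ} (l : Fin n → ℕ) (x : Fin (∑ i', (l i' + 1)) → ℂ) :
    Matrix (Fin (∑ i', (l i' + 1))) (Fin (∑ i', (l i' + 1))) ℂ :=
  fun k p => deriv (fun t : ℂ => pronyMap l (Function.update x p t) k) (x p)

/-- The block-diagonal matrix `diag(D_1⁻¹,…,D_n⁻¹)`, where `D_i⁻¹` is the
`(l_i+1)×(l_i+1)` identity matrix except for its last column, which is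
`(0, −a_{i,0}/a_{i,l_i−1}, …, −a_{i,l_i−2}/a_{i,l_i−1}, 1/a_{i,l_i−1})ᵀ`. -/
def diagDinv {n : ℕ} (l : Fin n → ℕ) (a : (i : Fin n) → Fin (l i) → ℂ) :
    Matrix (Fin (∑ i', (l i' + 1))) (Fin (∑ i', (l i' + 1))) ℂ :=
  fun r c => ∑ i, ∑ s : Fin (l i + 1), ∑ t : Fin (l i + 1),
    if r = encP l i s ∧ c = encP l i t then
      (if (t : ℕ) = l i then
        (if hs0 : (s : ℕ) = 0 then 0
        else if hsl : (s : ℕ) = l i then 1 / a i ⟨l i - 1, by omega⟩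
        else -(a i ⟨(s : ℕ) - 1, by have := s.isLt; omega⟩) /
              a i ⟨l i - 1, by have := s.isLt; omega⟩)
      else if (s : ℕ) = (t : ℕ) then 1 else 0)
    else 0
section Aux
variable {n : ℕ} (L : Fin n → ℕ)

theorem blockOff_mono {i i' : Fin n} (h : i < i') : blockOff L i + L i ≤ blockOff L i' := by
  unfold blockOff
  have : ∑ i'' ∈ insert i (Finset.Iio i), L i'' ≤ ∑ i'' ∈ Finset.Iio i', L i'' := by
    apply Finset.sum_le_sum_of_subset
    · intro x hx
      rcases Finset.mem_insert.mp hx with rfl | hx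
      · simpa using h
      · simp only [Finset.mem_Iio] at hx ⊢; exact hx.trans h
  rw [Finset.sum_insert (by simp)] at this
  omega

theorem encC_inj {i i' : Fin n} {j : Fin (L i)} {j' : Fin (L i')}
    (h : encC L i j = encC L i' j') : i = i' ∧ (j : ℕ) = (j' : ℕ) := by
  have hv : blockOff L i + (j : ℕ) = blockOff L i' + (j' : ℕ) := congrArg Fin.val h
  rcases lt_trichotomy i i' with hlt | rfl | hlt
  · have := blockOff_mono L hlt
    have := j.isLt
    omega
  · exact ⟨rfl, by omega⟩
  · have := blockOff_mono L hlt
    have := j'.isLt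
    omega

theorem encC_sigma_inj :
    Function.Injective (fun q : Σ i, Fin (L i) => encC L q.1 q.2) := by
  rintro ⟨i, j⟩ ⟨i', j'⟩ h
  obtain ⟨hi, hj⟩ := encC_inj L h
  dsimp at hi hj
  subst hi
  simp [Fin.ext_iff, hj]

theorem encC_bij :
    Function.Bijective (fun q : Σ i, Fin (L i) => encC L q.1 q.2) := by
  rw [Fintype.bijective_iff_injective_and_card]
  exact ⟨encC_sigma_inj L, by simp⟩

theorem encC_surj (p : Fin (∑ i, L i)) : ∃ i, ∃ j : Fin (L i), p = encC L i j := by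
  obtain ⟨⟨i, j⟩, h⟩ := (encC_bij L).2 p
  exact ⟨i, j, h.symm⟩

theorem sum_encC_eq (F : (i : Fin n) → Fin (L i) → ℂ) (i₀ : Fin n) (j₀ : Fin (L i₀)) :
    (∑ i, ∑ j : Fin (L i), if encC L i₀ j₀ = encC L i j then F i j else 0) = F i₀ j₀ := by
  rw [Finset.sum_eq_single i₀]
  · rw [Finset.sum_eq_single j₀]
    · simp
    · intro j _ hj
      rw [if_neg]
      intro h
      exact hj (Fin.ext (encC_inj L h).2.symm)
    · simp
  · intro i _ hi
    apply Finset.sum_eq_zero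
    intro j _
    rw [if_neg]
    intro h
    exact hi (encC_inj L h).1.symm
  · simp

theorem sum_sigma_encC (g : Fin (∑ i, L i) → ℂ) :
    ∑ p, g p = ∑ i, ∑ j : Fin (L i), g (encC L i j) := by
  rw [← Fintype.sum_bijective _ (encC_bij L) _ _ (fun q => rfl), Finset.sum_sigma']
  rw [← Finset.univ_sigma_univ]

end Aux
section Aux2
variable {n : ℕ} (l : Fin n → ℕ) (ξ : Fin n → ℂ) (a : (i : Fin n) → Fin (l i) → ℂ)

theorem confVand_apply (L : Fin n → ℕ) (k : Fin (∑ i, L i)) (i : Fin n) (j : Fin (L i)) :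
    confVand L ξ k (encC L i j) =
      ((k : ℕ).descFactorial j : ℂ) * ξ i ^ ((k : ℕ) - (j : ℕ)) := by
  unfold confVand
  exact sum_encC_eq L _ i j

theorem pronyParam_apply (i : Fin n) (j : Fin (l i + 1)) :
    pronyParam l ξ a (encP l i j) =
      if h : (j : ℕ) < l i then a i ⟨j, h⟩ else ξ i := by
  unfold pronyParam
  exact sum_encC_eq (fun i' => l i' + 1) _ i j

theorem pronyParam_a (i : Fin n) (j : Fin (l i)) :
    pronyParam l ξ a (encP l i j.castSucc) = a i j := by
  rw [pronyParam_apply]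
  simp

theorem pronyParam_xi (i : Fin n) :
    pronyParam l ξ a (encP l i (Fin.last (l i))) = ξ i := by
  rw [pronyParam_apply]
  simp

theorem diagDinv_ne {i i' : Fin n} (h : i ≠ i') (s : Fin (l i + 1)) (t : Fin (l i' + 1)) :
    diagDinv l a (encP l i s) (encP l i' t) = 0 := by
  unfold diagDinv
  apply Finset.sum_eq_zero
  intro i'' _
  apply Finset.sum_eq_zero
  intro s' _
  apply Finset.sum_eq_zero
  intro t' _
  rw [if_neg]
  rintro ⟨h1, h2⟩
  exact h ((encC_inj _ h1).1.trans (encC_inj _ h2).1.symm)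

theorem diagDinv_eq (i : Fin n) (s t : Fin (l i + 1)) :
    diagDinv l a (encP l i s) (encP l i t) =
      (if (t : ℕ) = l i then
        (if hs0 : (s : ℕ) = 0 then 0
        else if hsl : (s : ℕ) = l i then 1 / a i ⟨l i - 1, by omega⟩
        else -(a i ⟨(s : ℕ) - 1, by have := s.isLt; omega⟩) /
              a i ⟨l i - 1, by have := s.isLt; omega⟩)
      else if (s : ℕ) = (t : ℕ) then 1 else 0) := by
  unfold diagDinv
  rw [Finset.sum_eq_single i]
  · rw [Finset.sum_eq_single s]
    · rw [Finset.sum_eq_single t]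
      · rw [if_pos ⟨rfl, rfl⟩]
      · intro t' _ ht'
        rw [if_neg]
        rintro ⟨-, h2⟩
        exact ht' (Fin.ext (encC_inj _ h2.symm).2)
      · simp
    · intro s' _ hs'
      apply Finset.sum_eq_zero
      intro t' _
      rw [if_neg]
      rintro ⟨h1, -⟩
      exact hs' (Fin.ext (encC_inj _ h1.symm).2)
    · simp
  · intro i'' _ hi''
    apply Finset.sum_eq_zero
    intro s' _
    apply Finset.sum_eq_zero
    intro t' _
    rw [if_neg]
    rintro ⟨h1, -⟩
    exact hi'' (encC_inj _ h1.symm).1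
  · simp

end Aux2
section Aux3
variable {n : ℕ} (l : Fin n → ℕ) (ξ : Fin n → ℂ) (a : (i : Fin n) → Fin (l i) → ℂ)

theorem encP_cast_ne_last (i i' : Fin n) (j : Fin (l i)) :
    encP l i' (Fin.last (l i')) ≠ encP l i j.castSucc := by
  intro h
  obtain ⟨rfl, hv⟩ := encC_inj _ h
  simp only [Fin.val_last, Fin.coe_castSucc] at hv
  have := j.isLt
  omega

theorem jac_a (k : Fin (∑ i', (l i' + 1))) (i : Fin n) (j : Fin (l i)) :
    pronyJacobian l (pronyParam l ξ a) k (encP l i j.castSucc)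
      = ((k : ℕ).descFactorial j : ℂ) * ξ i ^ ((k : ℕ) - (j : ℕ)) := by
  unfold pronyJacobian
  have hdiff : ∀ t : ℂ,
      pronyMap l (Function.update (pronyParam l ξ a) (encP l i j.castSucc) t) k
        = (t - a i j) * (((k : ℕ).descFactorial j : ℂ) * ξ i ^ ((k : ℕ) - (j : ℕ)))
          + pronyMap l (pronyParam l ξ a) k := by
    intro t
    rw [← sub_eq_iff_eq_add]
    unfold pronyMap
    rw [← Finset.sum_sub_distrib, Finset.sum_eq_single i]
    · rw [← Finset.sum_sub_distrib, Finset.sum_eq_single j]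
      · rw [Function.update_of_ne (encP_cast_ne_last l i i j),
          Function.update_self, pronyParam_xi, pronyParam_a]
        ring
      · intro j' _ hj'
        rw [Function.update_of_ne (encP_cast_ne_last l i i j),
          Function.update_of_ne, sub_self]
        intro h
        exact hj' (Fin.ext (by simpa using (encC_inj _ h).2))
      · simp
    · intro i' _ hi'
      rw [← Finset.sum_sub_distrib]
      apply Finset.sum_eq_zero
      intro j' _
      rw [Function.update_of_ne (encP_cast_ne_last l i i' j),
        Function.update_of_ne, sub_self]
      intro h
      exact hi' (encC_inj _ h).1
    · simp
  rw [funext hdiff]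
  have hd := (((hasDerivAt_id (pronyParam l ξ a (encP l i j.castSucc))).sub_const
    (a i j)).mul_const (((k : ℕ).descFactorial j : ℂ) * ξ i ^ ((k : ℕ) - (j : ℕ)))).add_const
    (pronyMap l (pronyParam l ξ a) k)
  simp at hd
  rw [deriv_add_const]
  exact hd.deriv

theorem jac_xi (k : Fin (∑ i', (l i' + 1))) (i : Fin n) :
    pronyJacobian l (pronyParam l ξ a) k (encP l i (Fin.last (l i)))
      = ∑ j : Fin (l i), a i j * ((k : ℕ).descFactorial ((j : ℕ) + 1) : ℂ)
          * ξ i ^ ((k : ℕ) - ((j : ℕ) + 1)) := by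
  unfold pronyJacobian
  have hfun : ∀ t : ℂ,
      pronyMap l (Function.update (pronyParam l ξ a) (encP l i (Fin.last (l i))) t) k
        = (∑ j : Fin (l i), a i j * ((k : ℕ).descFactorial j : ℂ) * t ^ ((k : ℕ) - (j : ℕ)))
          + ∑ i' ∈ Finset.univ.erase i, ∑ j : Fin (l i'),
              a i' j * ((k : ℕ).descFactorial j : ℂ) * ξ i' ^ ((k : ℕ) - (j : ℕ)) := by
    intro t
    unfold pronyMap
    rw [← Finset.add_sum_erase _ _ (Finset.mem_univ i)]
    congr 1
    · apply Finset.sum_congr rfl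
      intro j _
      rw [Function.update_of_ne (Ne.symm (encP_cast_ne_last l i i j)),
        Function.update_self, pronyParam_a]
    · apply Finset.sum_congr rfl
      intro i' hi'
      apply Finset.sum_congr rfl
      intro j _
      rw [Function.update_of_ne (Ne.symm (encP_cast_ne_last l i' i j)),
        Function.update_of_ne, pronyParam_a, pronyParam_xi]
      intro h
      exact (Finset.mem_erase.mp hi').1 (encC_inj _ h).1
  rw [funext hfun, pronyParam_xi]
  have hd := (HasDerivAt.fun_sum (fun j _ =>
      ((hasDerivAt_pow ((k : ℕ) - (j : ℕ)) (ξ i)).const_mul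
        (a i j * ((k : ℕ).descFactorial j : ℂ))) :
      ∀ j : Fin (l i), j ∈ Finset.univ → HasDerivAt
        (fun t : ℂ => a i j * ((k : ℕ).descFactorial j : ℂ) * t ^ ((k : ℕ) - (j : ℕ)))
        (a i j * ((k : ℕ).descFactorial j : ℂ) *
          ((((k : ℕ) - (j : ℕ) : ℕ) : ℂ) * ξ i ^ ((k : ℕ) - (j : ℕ) - 1))) (ξ i))).add_const
    (∑ i' ∈ Finset.univ.erase i, ∑ j : Fin (l i'),
      a i' j * ((k : ℕ).descFactorial j : ℂ) * ξ i' ^ ((k : ℕ) - (j : ℕ)))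
  rw [hd.deriv]
  apply Finset.sum_congr rfl
  intro j _
  have hdesc : (k : ℕ).descFactorial ((j : ℕ) + 1)
      = ((k : ℕ) - (j : ℕ)) * (k : ℕ).descFactorial j := Nat.descFactorial_succ _ _
  have hexp : (k : ℕ) - (j : ℕ) - 1 = (k : ℕ) - ((j : ℕ) + 1) := by omega
  rw [hexp, hdesc]
  push_cast
  ring

end Aux3
section Aux4
open Polynomial

theorem confVand_det_ne_zero {n : ℕ} (L : Fin n → ℕ) (ξ : Fin n → ℂ)
    (hξ : Function.Injective ξ) : (confVand L ξ).det ≠ 0 := by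
  intro h0
  rw [← Matrix.det_transpose] at h0
  obtain ⟨v, hv, hmul⟩ := Matrix.exists_mulVec_eq_zero_iff.mpr h0
  set p : ℂ[X] := ∑ k : Fin (∑ i, L i), C (v k) * X ^ (k : ℕ) with hpdef
  have hcoeff : ∀ k : Fin (∑ i, L i), p.coeff (k : ℕ) = v k := by
    intro k
    rw [hpdef, finset_sum_coeff]
    rw [Finset.sum_eq_single k]
    · simp
    · intro k' _ hk'
      simp only [coeff_C_mul, coeff_X_pow]
      rw [if_neg (fun h => hk' (Fin.ext h.symm)), mul_zero]
    · simp
  obtain ⟨k0, hk0⟩ := Function.ne_iff.mp hv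
  have hR : 0 < ∑ i, L i := k0.pos
  have heval : ∀ (i : Fin n) (m : ℕ), m < L i → (derivative^[m] p).IsRoot (ξ i) := by
    intro i m hm
    have h1 := congrFun hmul (encC L i ⟨m, hm⟩)
    simp only [Matrix.mulVec, dotProduct, Matrix.transpose_apply, Pi.zero_apply] at h1
    have h2 : ∀ k : Fin (∑ i, L i), confVand L ξ k (encC L i ⟨m, hm⟩)
        = ((k : ℕ).descFactorial m : ℂ) * ξ i ^ ((k : ℕ) - m) :=
      fun k => confVand_apply ξ L k i ⟨m, hm⟩
    simp only [h2] at h1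
    rw [Polynomial.IsRoot]
    have h3 : (derivative^[m] p).eval (ξ i)
        = ∑ k : Fin (∑ i, L i), ((k : ℕ).descFactorial m : ℂ) * ξ i ^ ((k : ℕ) - m) * v k := by
      rw [hpdef, iterate_derivative_sum]
      rw [eval_finset_sum]
      apply Finset.sum_congr rfl
      intro k _
      rw [iterate_derivative_C_mul, iterate_derivative_X_pow_eq_smul]
      simp [smul_eq_mul]
      ring
    rw [h3, h1]
  have hp : p = 0 := by
    by_contra hp
    have hdeg : p.natDegree ≤ ∑ i, L i - 1 := by
      apply natDegree_sum_le_of_forall_le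
      intro k _
      exact (natDegree_C_mul_X_pow_le _ _).trans (by have := k.isLt; omega)
    have hq : (∏ i, (X - C (ξ i)) ^ (L i)) ∣ p := by
      apply Fintype.prod_dvd_of_coprime
      · intro i j hij
        exact (pairwise_coprime_X_sub_C hξ hij).pow
      · intro i
        have hmult : L i ≤ p.rootMultiplicity (ξ i) := by
          rcases Nat.eq_zero_or_pos (L i) with h | h
          · omega
          · have hlt : L i - 1 < p.rootMultiplicity (ξ i) := by
              rw [lt_rootMultiplicity_iff_isRoot_iterate_derivative_of_mem_nonZeroDivisors hp
                (mem_nonZeroDivisors_of_ne_zero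
                  (Nat.cast_ne_zero.mpr (Nat.factorial_ne_zero _)))]
              intro m hm
              exact heval i m (by omega)
            omega
        exact dvd_trans (pow_dvd_pow _ hmult) (p.pow_rootMultiplicity_dvd (ξ i))
    have hdq : (∏ i, (X - C (ξ i)) ^ (L i)).natDegree = ∑ i, L i := by
      rw [natDegree_prod _ _ (fun i _ => pow_ne_zero _ (X_sub_C_ne_zero (ξ i)))]
      simp [natDegree_pow]
    have := natDegree_le_of_dvd hq hp
    omega
  apply hk0
  rw [← hcoeff k0, hp]
  simp

end Aux4
section Aux5
variable {n : ℕ} (l : Fin n → ℕ) (ξ : Fin n → ℂ) (a : (i : Fin n) → Fin (l i) → ℂ)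

theorem sum_sigma_encP (g : Fin (∑ i', (l i' + 1)) → ℂ) :
    ∑ p, g p = ∑ i, ∑ t : Fin (l i + 1), g (encP l i t) :=
  sum_sigma_encC (fun i' => l i' + 1) g

theorem confVand_apply' (k : Fin (∑ i', (l i' + 1))) (i : Fin n) (t : Fin (l i + 1)) :
    confVand (fun i' => l i' + 1) ξ k (encP l i t) =
      ((k : ℕ).descFactorial t : ℂ) * ξ i ^ ((k : ℕ) - (t : ℕ)) :=
  confVand_apply ξ (fun i' => l i' + 1) k i t

theorem key_mul (hl : ∀ i, 1 ≤ l i)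
    (hhigh : ∀ i, a i ⟨l i - 1, Nat.sub_lt (hl i) Nat.one_pos⟩ ≠ 0) :
    pronyJacobian l (pronyParam l ξ a) * diagDinv l a = confVand (fun i => l i + 1) ξ := by
  ext k c
  obtain ⟨i, t, rfl⟩ : ∃ i, ∃ t : Fin (l i + 1), c = encP l i t := encC_surj _ c
  rw [Matrix.mul_apply, confVand_apply' l ξ k i t,
    sum_sigma_encP l (fun p => pronyJacobian l (pronyParam l ξ a) k p
      * diagDinv l a p (encP l i t)),
    Finset.sum_eq_single i]
  rotate_left
  · intro i' _ hi'
    apply Finset.sum_eq_zero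
    intro s _
    rw [diagDinv_ne l a hi' s t, mul_zero]
  · simp
  simp only [diagDinv_eq l a i]
  by_cases ht : (t : ℕ) = l i
  · -- last column of the block
    simp only [if_pos ht]
    obtain ⟨m, hm⟩ : ∃ m, l i = m + 1 := ⟨l i - 1, by have := hl i; omega⟩
    have hsplit : ∀ F : ℕ → ℂ, ∑ j ∈ Finset.range (l i), F j
        = ∑ j ∈ Finset.range m, F j + F m := by
      intro F; rw [hm, Finset.sum_range_succ]
    have hsplit' : ∀ F : ℕ → ℂ, ∑ j ∈ Finset.range (l i), F j
        = (∑ j ∈ Finset.range m, F (j + 1)) + F 0 := by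
      intro F; rw [hm, Finset.sum_range_succ']
    set g : ℕ → ℂ := fun s =>
      (if s = l i then
          (∑ j ∈ Finset.range (l i), (if h : j < l i then a i ⟨j, h⟩ else 0) *
            (((k : ℕ).descFactorial (j + 1) : ℂ) * ξ i ^ ((k : ℕ) - (j + 1))))
        else ((k : ℕ).descFactorial s : ℂ) * ξ i ^ ((k : ℕ) - s)) *
      (if s = 0 then 0 else if s = l i then 1 / a i ⟨l i - 1, by have := hl i; omega⟩
        else -(if h : s - 1 < l i then a i ⟨s - 1, h⟩ else 0) /
          a i ⟨l i - 1, by have := hl i; omega⟩) with hg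
    have hterm : ∀ s : Fin (l i + 1),
        pronyJacobian l (pronyParam l ξ a) k (encP l i s) *
          (if hs0 : (s : ℕ) = 0 then 0
            else if hsl : (s : ℕ) = l i then 1 / a i ⟨l i - 1, by omega⟩
            else -(a i ⟨(s : ℕ) - 1, by have := s.isLt; omega⟩) /
              a i ⟨l i - 1, by have := s.isLt; omega⟩) = g (s : ℕ) := by
      intro s
      by_cases hs0 : (s : ℕ) = 0
      · rw [dif_pos hs0, hs0]
        simp [hg]
      by_cases hsl : (s : ℕ) = l i
      · have hslast : s = Fin.last (l i) := Fin.ext (by simpa using hsl)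
        subst hslast
        rw [dif_neg hs0, dif_pos hsl, jac_xi l ξ a k i]
        have hW : (∑ j : Fin (l i), a i j * ((k : ℕ).descFactorial ((j : ℕ) + 1) : ℂ)
              * ξ i ^ ((k : ℕ) - ((j : ℕ) + 1)))
            = ∑ j ∈ Finset.range (l i), (if h : j < l i then a i ⟨j, h⟩ else 0) *
              (((k : ℕ).descFactorial (j + 1) : ℂ) * ξ i ^ ((k : ℕ) - (j + 1))) := by
          rw [← Fin.sum_univ_eq_sum_range (fun j => (if h : j < l i then a i ⟨j, h⟩ else 0) *
            (((k : ℕ).descFactorial (j + 1) : ℂ) * ξ i ^ ((k : ℕ) - (j + 1)))) (l i)]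
          apply Finset.sum_congr rfl
          intro j _
          rw [dif_pos j.isLt, Fin.eta, mul_assoc]
        rw [hW]
        simp [hg, show ¬ l i = 0 from by have := hl i; omega]
      · rw [dif_neg hs0, dif_neg hsl]
        have hslt : (s : ℕ) < l i := by have := s.isLt; omega
        have hcast : s = (⟨(s : ℕ), hslt⟩ : Fin (l i)).castSucc := Fin.ext rfl
        rw [hcast, jac_a l ξ a k i]
        simp only [hg, Fin.coe_castSucc, if_neg hsl, if_neg hs0,
          dif_pos (by omega : (s : ℕ) - 1 < l i)]
    rw [Finset.sum_congr rfl (fun s _ => hterm s),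
      Fin.sum_univ_eq_sum_range g (l i + 1), Finset.sum_range_succ, hsplit' g]
    have hg0 : g 0 = 0 := by simp [hg]
    have hgtop : g (l i) =
        (∑ j ∈ Finset.range (l i), (if h : j < l i then a i ⟨j, h⟩ else 0) *
          (((k : ℕ).descFactorial (j + 1) : ℂ) * ξ i ^ ((k : ℕ) - (j + 1)))) *
        (1 / a i ⟨l i - 1, by have := hl i; omega⟩) := by
      simp [hg, show ¬ l i = 0 from by have := hl i; omega]
    have hgsucc : ∀ j ∈ Finset.range m, g (j + 1)
        = (((k : ℕ).descFactorial (j + 1) : ℂ) * ξ i ^ ((k : ℕ) - (j + 1))) *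
          (-(if h : j < l i then a i ⟨j, h⟩ else 0) /
            a i ⟨l i - 1, by have := hl i; omega⟩) := by
      intro j hj
      rw [Finset.mem_range] at hj
      simp only [hg, if_neg (by omega : ¬ j + 1 = l i), if_neg (by omega : ¬ j + 1 = 0),
        Nat.add_sub_cancel]
    rw [hg0, add_zero, hgtop, Finset.sum_congr rfl hgsucc,
      hsplit (fun j => (if h : j < l i then a i ⟨j, h⟩ else 0) *
        (((k : ℕ).descFactorial (j + 1) : ℂ) * ξ i ^ ((k : ℕ) - (j + 1))))]
    have hneg : ∑ j ∈ Finset.range m,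
        (((k : ℕ).descFactorial (j + 1) : ℂ) * ξ i ^ ((k : ℕ) - (j + 1))) *
          (-(if h : j < l i then a i ⟨j, h⟩ else 0) /
            a i ⟨l i - 1, by have := hl i; omega⟩)
        = -((∑ j ∈ Finset.range m, (if h : j < l i then a i ⟨j, h⟩ else 0) *
            (((k : ℕ).descFactorial (j + 1) : ℂ) * ξ i ^ ((k : ℕ) - (j + 1)))) *
          (1 / a i ⟨l i - 1, by have := hl i; omega⟩)) := by
      rw [Finset.sum_mul, ← Finset.sum_neg_distrib]
      apply Finset.sum_congr rfl
      intro j _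
      ring
    rw [hneg]
    have hat' : ∀ q : l i - 1 < l i, a i ⟨l i - 1, q⟩
        = (if h : m < l i then a i ⟨m, h⟩ else 0) := by
      intro q
      rw [dif_pos (by omega : m < l i)]
      exact congrArg (a i) (Fin.ext (by simp only [Fin.val_mk]; omega))
    rw [hat', dif_pos (by omega : m < l i)]
    have hA : a i ⟨m, by omega⟩ ≠ 0 := by
      have h := hhigh i
      have hfin : (⟨l i - 1, by have := hl i; omega⟩ : Fin (l i)) = ⟨m, by omega⟩ :=
        Fin.ext (by simp only [Fin.val_mk]; omega)
      rwa [hfin] at h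
    conv_rhs => rw [ht, hm]
    field_simp [hA]
    ring
  · -- identity columns
    simp only [if_neg ht]
    rw [Finset.sum_eq_single t]
    · rw [if_pos rfl, mul_one]
      have htlt : (t : ℕ) < l i := by have := t.isLt; omega
      have hcast : t = (⟨(t : ℕ), htlt⟩ : Fin (l i)).castSucc := Fin.ext rfl
      rw [hcast, jac_a l ξ a k i]
      rfl
    · intro s _ hs
      rw [if_neg (fun h => hs (Fin.ext h)), mul_zero]
    · simp

end Aux5

/-- if the nodes are pairwise distinct and the highest magnitudes are
nonzero, then the Jacobian of the Prony map is invertible and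
`J_P(x)⁻¹ = diag(D_1⁻¹,…,D_n⁻¹) · U(ξ_1,l_1+1,…,ξ_n,l_n+1)⁻¹`. -/
theorem pronyJacobian_inverse
    (n : ℕ) (hn : 1 ≤ n) (l : Fin n → ℕ) (hl : ∀ i, 1 ≤ l i)
    (ξ : Fin n → ℂ) (a : (i : Fin n) → Fin (l i) → ℂ)
    (hdist : ∀ i j : Fin n, i ≠ j → ξ i ≠ ξ j)
    (hhigh : ∀ i, a i ⟨l i - 1, by have := hl i; omega⟩ ≠ 0) :
    IsUnit (pronyJacobian l (pronyParam l ξ a)) ∧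
      (pronyJacobian l (pronyParam l ξ a))⁻¹ =
        diagDinv l a * (confVand (fun i => l i + 1) ξ)⁻¹ := by
  have hinj : Function.Injective ξ := fun i j h => by
    by_contra hne
    exact hdist i j hne h
  have hUdet : IsUnit (confVand (fun i => l i + 1) ξ).det :=
    (confVand_det_ne_zero (fun i => l i + 1) ξ hinj).isUnit
  have hright : pronyJacobian l (pronyParam l ξ a) *
      (diagDinv l a * (confVand (fun i => l i + 1) ξ)⁻¹) = 1 := by
    rw [← Matrix.mul_assoc, key_mul l ξ a hl hhigh, Matrix.mul_nonsing_inv _ hUdet]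
  exact ⟨(Matrix.isUnit_iff_isUnit_det _).mpr (Matrix.isUnit_det_of_right_inverse hright), Matrix.inv_eq_right_inv hright⟩
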